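/- Let H be a positive definite 2n×2n complex matrix with Hᵀ𝒥_nH = 𝒥_n, and let S be the unique positive semidefinite square root of H (so S is positive definite and S² = H). Then Sᵀ𝒥_nS = 𝒥_n, i.e. S ∈ Sp(2n,ℂ). -/

import Mathlib

open Matrix
open scoped ComplexOrder

/-- The matrix `𝒥_n = [[0, I_n], [-I_n, 0]]` of the paper. -/
def Jmat (n : ℕ) : Matrix (Fin n ⊕ Fin n) (Fin n ⊕ Fin n) ℂ :=
  Matrix.fromBlocks 0 1 (-1) 0

lemma Jmat_mul_Jmat (n : ℕ) : Jmat n * Jmat n = -1 := by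
  simp only [Jmat, Matrix.fromBlocks_multiply, ← Matrix.fromBlocks_one,
    Matrix.fromBlocks_neg]
  simp

lemma Jmat_conjTranspose (n : ℕ) : (Jmat n)ᴴ = -Jmat n := by
  simp only [Jmat, Matrix.fromBlocks_conjTranspose, Matrix.fromBlocks_neg]
  simp

/-- the (unique) positive semidefinite square root of a positive
definite symplectic matrix is again symplectic. -/
theorem sqrt_of_posDef_symplectic_is_symplectic
    (n : ℕ) (H S : Matrix (Fin n ⊕ Fin n) (Fin n ⊕ Fin n) ℂ)
    (hH : H.PosDef) (hsp : Hᵀ * Jmat n * H = Jmat n)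
    (hS : S.PosSemidef) (hSsq : S * S = H) :
    Sᵀ * Jmat n * S = Jmat n := by
  set J := Jmat n with hJ
  have hJJ : J * J = -1 := Jmat_mul_Jmat n
  have hJH : Jᴴ = -J := Jmat_conjTranspose n
  have hJJ' : J * Jᴴ = 1 := by rw [hJH]; simp [hJJ]
  have hJJ'' : Jᴴ * J = 1 := by rw [hJH]; simp [hJJ]
  -- S is invertible
  have hdetS : IsUnit S.det := by
    have hdetH : H.det ≠ 0 := ne_of_gt hH.det_pos
    rw [← hSsq, Matrix.det_mul] at hdetH
    exact isUnit_iff_ne_zero.mpr (fun h => hdetH (by rw [h, zero_mul]))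
  -- S is positive definite
  have hSpd : S.PosDef := by
    exact hS.posDef_iff_isUnit.mpr ((Matrix.isUnit_iff_isUnit_det S).mpr hdetS)
  -- H is invertible
  have hdetH : IsUnit H.det := isUnit_iff_ne_zero.mpr (ne_of_gt hH.det_pos)
  -- the candidate matrix T = Jᴴ * S⁻¹ᵀ * J
  set T := Jᴴ * (S⁻¹)ᵀ * J with hT
  have hTpsd : T.PosSemidef := (hSpd.inv.transpose.posSemidef).conjTranspose_mul_mul_same J
  -- T² = H
  have hHinvT : (H⁻¹)ᵀ * J = J * H := by
    have : (Hᵀ)⁻¹ * (Hᵀ * J * H) = (Hᵀ)⁻¹ * J := by rw [hsp]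
    rw [← Matrix.mul_assoc, ← Matrix.mul_assoc,
      Matrix.nonsing_inv_mul _ (by simpa using hdetH), Matrix.one_mul] at this
    rw [Matrix.transpose_nonsing_inv, ← this]
  have hTsq : T ^ 2 = S ^ 2 := by
    have hSS : (S⁻¹)ᵀ * (J * Jᴴ) * (S⁻¹)ᵀ = (H⁻¹)ᵀ := by
      rw [hJJ', Matrix.mul_one, ← Matrix.transpose_mul, ← Matrix.mul_inv_rev, hSsq]
    calc T ^ 2 = Jᴴ * ((S⁻¹)ᵀ * (J * Jᴴ) * (S⁻¹)ᵀ) * J := by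
          rw [pow_two, hT]; simp only [Matrix.mul_assoc]
      _ = Jᴴ * ((H⁻¹)ᵀ * J) := by rw [hSS, Matrix.mul_assoc]
      _ = (Jᴴ * J) * H := by rw [hHinvT, ← Matrix.mul_assoc]
      _ = H := by rw [hJJ'', Matrix.one_mul]
      _ = S ^ 2 := by rw [← hSsq, pow_two]
  have hTS : T = S := by
    open scoped MatrixOrder in
    exact (CFC.sq_eq_sq_iff T S hTpsd.nonneg hS.nonneg).mp hTsq
  -- conclude
  have h1 : J * S = (S⁻¹)ᵀ * J := by
    have := congrArg (fun X => J * X) hTS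
    simpa [hT, ← Matrix.mul_assoc, hJJ', Matrix.one_mul] using this.symm
  calc Sᵀ * J * S = Sᵀ * (J * S) := by rw [Matrix.mul_assoc]
    _ = (Sᵀ * (S⁻¹)ᵀ) * J := by rw [h1, Matrix.mul_assoc]
    _ = (S⁻¹ * S)ᵀ * J := by rw [Matrix.transpose_mul]
    _ = J := by rw [Matrix.nonsing_inv_mul _ hdetS, Matrix.transpose_one, Matrix.one_mul]
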